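/- Assume ∏_{i=0}^{N−1} B̂^i(0) = γ·Id with γ ∈ {−1, 1} (so that γ = w_N(0)). Define the N×N real matrices (indices 1,…,N): E with E_{N,1} = 1 and all other entries 0; F with entries F_{i,j} = − w_{i−1}(0)·w_{N−j}^{[j]}(0)/(γ·α_{j−1}); and D_N(0), the symmetric tridiagonal matrix with diagonal entries (D_N(0))_{i,i} = β_{i−1} and off-diagonal entries (D_N(0))_{i,i+1} = (D_N(0))_{i+1,i} = α_{i−1}. Then D_N(0) is invertible and the following four identities hold: F·Eᵀ = 0, Eᵀ·F = 0, D_N(0)⁻¹·E = F·E, and γ·F·D_N(0) + α_{N−1}·F·E = 0. -/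

import Mathlib

open scoped Matrix

/-- The product `C (n₀ + len - 1) * ⋯ * C n₀` of matrices, with larger indices on the left;
equal to the identity when `len = 0`. -/
def prodDesc (C : ℤ → Matrix (Fin 2) (Fin 2) ℝ) (n₀ : ℤ) : ℕ → Matrix (Fin 2) (Fin 2) ℝ
  | 0 => 1
  | len + 1 => C (n₀ + len) * prodDesc C n₀ len

/-- The transfer matrix `B̂^j(x)` associated with the sequences `α`, `β`. -/
noncomputable def transferMatrix (α β : ℤ → ℝ) (j : ℤ) (x : ℝ) : Matrix (Fin 2) (Fin 2) ℝ :=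
  !![0, 1; -(α (j - 1) / α j), (x - β j) / α j]

lemma prodDesc_split (C : ℤ → Matrix (Fin 2) (Fin 2) ℝ) (n₀ : ℤ) (a b : ℕ) :
    prodDesc C n₀ (a + b) = prodDesc C (n₀ + a) b * prodDesc C n₀ a := by
  induction b with
  | zero => simp [prodDesc]
  | succ b ih =>
      show prodDesc C n₀ ((a + b) + 1) = _
      rw [prodDesc, ih, prodDesc, Matrix.mul_assoc]
      congr 2
      push_cast; ring

lemma transfer_mulVec (α β : ℤ → ℝ) (j : ℤ) (a b : ℝ) :
    (transferMatrix α β j 0) *ᵥ ![a, b]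
      = ![b, -(α (j - 1) / α j) * a + (0 - β j) / α j * b] := by
  funext i
  fin_cases i <;>
    simp [transferMatrix, Matrix.mulVec, dotProduct, Fin.sum_univ_two]

section Aux
variable (α β : ℤ → ℝ) (hαpos : ∀ j, 0 < α j)
    (W : ℕ → ℕ → ℝ → ℝ)
    (hW0 : ∀ (k : ℕ) (x : ℝ), W k 0 x = 1)
    (hW1 : ∀ (k : ℕ) (x : ℝ), W k 1 x = (x - β k) / α k)
    (hWrec : ∀ k : ℕ, ∀ n : ℕ, 1 ≤ n → ∀ x : ℝ,
      α ((n : ℤ) + k - 1) * W k (n - 1) x + β ((n : ℤ) + k) * W k n x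
        + α ((n : ℤ) + k) * W k (n + 1) x = x * W k n x)

include hαpos hW0 hW1 hWrec

lemma colW (k n : ℕ) :
    (prodDesc (fun j => transferMatrix α β j 0) (k : ℤ) n) *ᵥ ![0, 1]
      = ![(if n = 0 then 0 else W k (n - 1) 0), W k n 0] := by
  induction n with
  | zero => simp [prodDesc, hW0]
  | succ n ih =>
      rw [prodDesc, ← Matrix.mulVec_mulVec, ih, transfer_mulVec]
      rcases Nat.eq_zero_or_pos n with hn | hn
      · subst hn
        simp [hW0, hW1]
      · have hne : n ≠ 0 := hn.ne'
        have hα : α ((k : ℤ) + n) ≠ 0 := (hαpos _).ne'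
        have hrec := hWrec k n hn 0
        have hα' : α ((n : ℤ) + k) ≠ 0 := (hαpos _).ne'
        have hWsucc : W k (n + 1) 0 =
            (0 * W k n 0 - α ((n : ℤ) + k - 1) * W k (n - 1) 0
              - β ((n : ℤ) + k) * W k n 0) / α ((n : ℤ) + k) := by
          rw [eq_div_iff hα']
          linarith [hrec]
        funext i
        fin_cases i
        · simp [hne]
        · simp only [hne, if_false, Fin.mk_one, Matrix.cons_val_one, Matrix.head_cons,
            Matrix.cons_val_zero]
          rw [hWsucc]
          have h1 : (k : ℤ) + n - 1 = (n : ℤ) + k - 1 := by ring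
          have h2 : (k : ℤ) + n = (n : ℤ) + k := by ring
          rw [h1, h2]
          field_simp
          ring

lemma firstcol (j n : ℕ) :
    (prodDesc (fun j => transferMatrix α β j 0) (j : ℤ) (n + 1)) *ᵥ ![1, 0]
      = (-(α ((j : ℤ) - 1) / α j)) •
        ![(if n = 0 then 0 else W (j + 1) (n - 1) 0), W (j + 1) n 0] := by
  have hsplit := prodDesc_split (fun j => transferMatrix α β j 0) (j : ℤ) 1 n
  rw [show n + 1 = 1 + n by ring, hsplit]
  have h1 : prodDesc (fun j => transferMatrix α β j 0) (j : ℤ) 1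
      = transferMatrix α β j 0 := by
    simp [prodDesc]
  rw [h1, ← Matrix.mulVec_mulVec, transfer_mulVec]
  have : ![(0:ℝ), -(α ((j:ℤ) - 1) / α j) * 1 + (0 - β j) / α j * 0]
      = (-(α ((j : ℤ) - 1) / α j)) • ![(0:ℝ), 1] := by
    funext i; fin_cases i <;> simp
  rw [this, Matrix.mulVec_smul]
  have h2 : ((j : ℤ) + (1 : ℕ)) = ((j + 1 : ℕ) : ℤ) := by push_cast; ring
  rw [h2, colW α β hαpos W hW0 hW1 hWrec (j + 1) n]

lemma srec (j m : ℕ) :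
    W j (m + 2) 0 = -(α (j : ℤ) / α ((j : ℤ) + 1)) * W (j + 2) m 0
      - (β (j : ℤ) / α (j : ℤ)) * W (j + 1) (m + 1) 0 := by
  set C := fun j => transferMatrix α β j 0 with hC
  have hsplit := prodDesc_split C (j : ℤ) 1 (m + 1)
  have hbase : prodDesc C (j : ℤ) 1 = transferMatrix α β j 0 := by simp [prodDesc, hC]
  simp only [Nat.cast_one] at hsplit
  have key : (prodDesc C (j : ℤ) (m + 2)) *ᵥ ![0, 1]
      = (prodDesc C ((j : ℤ) + 1) (m + 1)) *ᵥ ((transferMatrix α β j 0) *ᵥ ![0, 1]) := by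
    rw [show m + 2 = 1 + (m + 1) by ring, hsplit, hbase, ← Matrix.mulVec_mulVec]
  rw [colW α β hαpos W hW0 hW1 hWrec j (m + 2)] at key
  rw [transfer_mulVec] at key
  have hvec : ![(1:ℝ), -(α ((j:ℤ) - 1) / α j) * 0 + (0 - β j) / α j * 1]
      = ![(1:ℝ), 0] + ((0 - β (j:ℤ)) / α j) • ![0, 1] := by
    funext i; fin_cases i <;> simp
  rw [hvec, Matrix.mulVec_add, Matrix.mulVec_smul] at key
  have hj1 : ((j : ℤ) + 1) = ((j + 1 : ℕ) : ℤ) := by push_cast; ring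
  rw [hj1, colW α β hαpos W hW0 hW1 hWrec (j + 1) (m + 1),
    firstcol α β hαpos W hW0 hW1 hWrec (j + 1) m] at key
  have := congrFun key 1
  simp only [Matrix.cons_val_one, Matrix.head_cons, Pi.add_apply, Pi.smul_apply,
    smul_eq_mul, Matrix.cons_val_zero] at this
  rw [this]
  have hc : ((j + 1 : ℕ) : ℤ) - 1 = (j : ℤ) := by push_cast; ring
  rw [hc, hj1]
  ring

end Aux

lemma sum_ite_nat {N : ℕ} (m : ℕ) (g : Fin N → ℝ) :
    (∑ k : Fin N, if (k : ℕ) = m then g k else 0)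
      = if hm : m < N then g ⟨m, hm⟩ else 0 := by
  split_ifs with hm
  · rw [Finset.sum_eq_single ⟨m, hm⟩]
    · simp
    · intro b _ hb
      rw [if_neg]
      intro hbm
      exact hb (Fin.ext hbm)
    · intro h; exact absurd (Finset.mem_univ _) h
  · apply Finset.sum_eq_zero
    intro k _
    rw [if_neg]
    intro hk
    exact hm (hk ▸ k.isLt)

lemma Dmul_apply {N : ℕ} (α β : ℤ → ℝ) (D : Matrix (Fin N) (Fin N) ℝ)
    (hD : ∀ i j : Fin N, D i j =
      if i = j then β (i : ℕ)
      else if (i : ℕ) + 1 = (j : ℕ) then α (i : ℕ)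
      else if (j : ℕ) + 1 = (i : ℕ) then α (j : ℕ)
      else 0)
    (u : Fin N → ℝ) (i : Fin N) :
    (D *ᵥ u) i =
      (if h : 0 < (i : ℕ) then
        α (((i : ℕ) - 1 : ℕ) : ℤ) * u ⟨(i : ℕ) - 1, Nat.lt_of_le_of_lt (Nat.sub_le _ _) i.isLt⟩
       else 0)
      + β ((i : ℕ) : ℤ) * u i
      + (if h : (i : ℕ) + 1 < N then α ((i : ℕ) : ℤ) * u ⟨(i : ℕ) + 1, h⟩ else 0) := by
  have hsplit : ∀ k : Fin N, D i k * u k =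
      (if k = i then β ((i : ℕ) : ℤ) * u k else 0)
      + (if (k : ℕ) = (i : ℕ) + 1 then α ((i : ℕ) : ℤ) * u k else 0)
      + (if (k : ℕ) = (i : ℕ) - 1 ∧ 0 < (i : ℕ) then α ((k : ℕ) : ℤ) * u k else 0) := by
    intro k
    rw [hD]
    simp only [Fin.ext_iff]
    split_ifs <;> first | (exfalso; omega) | ring
  have hmv : (D *ᵥ u) i = ∑ k : Fin N, D i k * u k := rfl
  rw [hmv]
  simp_rw [hsplit]
  rw [Finset.sum_add_distrib, Finset.sum_add_distrib]
  have h1 : (∑ k : Fin N, if k = i then β ((i : ℕ) : ℤ) * u k else 0)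
      = β ((i : ℕ) : ℤ) * u i := by
    rw [Finset.sum_ite_eq' Finset.univ i]; simp
  have h2 : (∑ k : Fin N, if (k : ℕ) = (i : ℕ) + 1 then α ((i : ℕ) : ℤ) * u k else 0)
      = if h : (i : ℕ) + 1 < N then α ((i : ℕ) : ℤ) * u ⟨(i : ℕ) + 1, h⟩ else 0 := by
    rw [sum_ite_nat]
  have h3 : (∑ k : Fin N, if (k : ℕ) = (i : ℕ) - 1 ∧ 0 < (i : ℕ) then α ((k : ℕ) : ℤ) * u k else 0)
      = if h : 0 < (i : ℕ) then
          α (((i : ℕ) - 1 : ℕ) : ℤ) * u ⟨(i : ℕ) - 1, Nat.lt_of_le_of_lt (Nat.sub_le _ _) i.isLt⟩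
        else 0 := by
    by_cases hi : 0 < (i : ℕ)
    · have hcond : ∀ k : Fin N, ((k : ℕ) = (i : ℕ) - 1 ∧ 0 < (i : ℕ))
          = ((k : ℕ) = (i : ℕ) - 1) := fun k => by simp [hi]
      simp_rw [hcond]
      rw [sum_ite_nat, dif_pos (Nat.lt_of_le_of_lt (Nat.sub_le _ _) i.isLt), dif_pos hi]
    · rw [dif_neg hi]
      apply Finset.sum_eq_zero
      intro k _
      rw [if_neg]
      exact fun hk => hi hk.2
  rw [h1, h2, h3]
  ring

set_option maxHeartbeats 1600000 in
theorem stmt7 (N : ℕ) (hN : 2 ≤ N)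
    (α β : ℤ → ℝ) (hαpos : ∀ j, 0 < α j)
    (hαper : ∀ j, α (j + N) = α j) (hβper : ∀ j, β (j + N) = β j)
    -- `W k n` is the orthonormal polynomial `w_n^{[k]}` associated with the shifted sequences
    (W : ℕ → ℕ → ℝ → ℝ)
    (hW0 : ∀ (k : ℕ) (x : ℝ), W k 0 x = 1)
    (hW1 : ∀ (k : ℕ) (x : ℝ), W k 1 x = (x - β k) / α k)
    (hWrec : ∀ k : ℕ, ∀ n : ℕ, 1 ≤ n → ∀ x : ℝ,
      α ((n : ℤ) + k - 1) * W k (n - 1) x + β ((n : ℤ) + k) * W k n x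
        + α ((n : ℤ) + k) * W k (n + 1) x = x * W k n x)
    (γ : ℝ) (hγ : γ = -1 ∨ γ = 1)
    (hProd : prodDesc (fun j => transferMatrix α β j 0) 0 N
      = γ • (1 : Matrix (Fin 2) (Fin 2) ℝ))
    (E F D : Matrix (Fin N) (Fin N) ℝ)
    (hE : ∀ i j : Fin N, E i j = if (i : ℕ) = N - 1 ∧ (j : ℕ) = 0 then 1 else 0)
    (hF : ∀ i j : Fin N, F i j =
      -(W 0 i 0 * W ((j : ℕ) + 1) (N - 1 - (j : ℕ)) 0) / (γ * α (j : ℕ)))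
    (hD : ∀ i j : Fin N, D i j =
      if i = j then β (i : ℕ)
      else if (i : ℕ) + 1 = (j : ℕ) then α (i : ℕ)
      else if (j : ℕ) + 1 = (i : ℕ) then α (j : ℕ)
      else 0) :
    IsUnit D ∧ F * Eᵀ = 0 ∧ Eᵀ * F = 0 ∧ D⁻¹ * E = F * E ∧
      γ • (F * D) + α ((N : ℤ) - 1) • (F * E) = 0 := by
  have hα0 : ∀ j : ℤ, α j ≠ 0 := fun j => (hαpos j).ne'
  have hγ0 : γ ≠ 0 := by rcases hγ with h | h <;> rw [h] <;> norm_num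
  have hγ2 : γ * γ = 1 := by rcases hγ with h | h <;> rw [h] <;> norm_num
  have hN1lt : N - 1 < N := by omega
  -- facts from the transfer matrix product
  have hPNv : (prodDesc (fun j => transferMatrix α β j 0) ((0:ℕ):ℤ) N) *ᵥ ![0,1]
      = ![(0:ℝ), γ] := by
    rw [Nat.cast_zero, hProd, Matrix.smul_mulVec, Matrix.one_mulVec]
    funext l; fin_cases l <;> simp
  have hcol := colW α β hαpos W hW0 hW1 hWrec 0 N
  have hcomb := hPNv.symm.trans hcol
  have hwN : W 0 N 0 = γ := by
    have h1 := congrFun hcomb 1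
    simpa using h1.symm
  have hwN1 : W 0 (N-1) 0 = 0 := by
    have h0 := congrFun hcomb 0
    simp [show N ≠ 0 by omega] at h0
    exact h0.symm
  have hPNv' : (prodDesc (fun j => transferMatrix α β j 0) ((0:ℕ):ℤ) N) *ᵥ ![1,0]
      = ![γ, (0:ℝ)] := by
    rw [Nat.cast_zero, hProd, Matrix.smul_mulVec, Matrix.one_mulVec]
    funext l; fin_cases l <;> simp
  have hfc := firstcol α β hαpos W hW0 hW1 hWrec 0 (N-1)
  rw [show N - 1 + 1 = N from by omega] at hfc
  have hs1 : W 1 (N-1) 0 = 0 := by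
    have h1 := congrFun (hPNv'.symm.trans hfc) 1
    simp only [Matrix.cons_val_one, Matrix.head_cons, Pi.smul_apply, smul_eq_mul] at h1
    have hne : -(α (((0:ℕ):ℤ) - 1) / α ((0:ℕ):ℤ)) ≠ 0 := by
      simp only [neg_ne_zero]
      exact div_ne_zero (hα0 _) (hα0 _)
    have h2 := h1.symm
    rcases mul_eq_zero.mp h2 with hbad | hok
    · exact absurd hbad hne
    · simpa using hok
  have hsrec := srec α β hαpos W hW0 hW1 hWrec
  -- scalar recurrences for w = W 0
  have hroww : ∀ n : ℕ, 1 ≤ n →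
      α (((n-1:ℕ)):ℤ) * W 0 (n-1) 0 + β ((n:ℕ):ℤ) * W 0 n 0
        + α ((n:ℕ):ℤ) * W 0 (n+1) 0 = 0 := by
    intro n hn
    have h := hWrec 0 n hn 0
    have hc : (n:ℤ) + ((0:ℕ):ℤ) - 1 = ((n-1:ℕ):ℤ) := by omega
    rw [hc] at h
    simpa using h
  have hDapp := Dmul_apply α β D hD
  -- F * Eᵀ = 0
  have hFEt : F * Eᵀ = 0 := by
    ext i j
    rw [Matrix.mul_apply, Matrix.zero_apply]
    apply Finset.sum_eq_zero
    intro k _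
    rw [Matrix.transpose_apply, hE, hF]
    by_cases h : (j:ℕ) = N - 1 ∧ (k:ℕ) = 0
    · rw [if_pos h, mul_one, h.2]
      norm_num [hs1]
    · rw [if_neg h, mul_zero]
  -- Eᵀ * F = 0
  have hEtF : Eᵀ * F = 0 := by
    ext i j
    rw [Matrix.mul_apply, Matrix.zero_apply]
    apply Finset.sum_eq_zero
    intro k _
    rw [Matrix.transpose_apply, hE, hF]
    by_cases h : (k:ℕ) = N - 1 ∧ (i:ℕ) = 0
    · rw [if_pos h, one_mul, h.1, hwN1]
      simp
    · rw [if_neg h, zero_mul]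
  -- entries of F * E
  have hFE : ∀ i j : Fin N, (F * E) i j =
      if (j:ℕ) = 0 then -(W 0 i 0) / (γ * α (((N-1:ℕ)):ℤ)) else 0 := by
    intro i j
    rw [Matrix.mul_apply]
    by_cases hj : (j:ℕ) = 0
    · rw [if_pos hj]
      rw [Finset.sum_eq_single (⟨N-1, hN1lt⟩ : Fin N)]
      · rw [hF, hE]
        rw [if_pos ⟨rfl, hj⟩, mul_one]
        show -(W 0 i 0 * W ((N-1) + 1) (N - 1 - (N-1)) 0) / (γ * α _) = _
        rw [show N - 1 + 1 = N from by omega, Nat.sub_self, hW0, mul_one]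
      · intro b _ hb
        rw [hE, if_neg, mul_zero]
        exact fun hc => hb (Fin.ext (by rw [hc.1]))
      · intro h; exact absurd (Finset.mem_univ _) h
    · rw [if_neg hj]
      apply Finset.sum_eq_zero
      intro k _
      rw [hE, if_neg (fun hc => hj hc.2), mul_zero]
  -- D * (F * E) = E
  have hDFE : D * (F * E) = E := by
    ext i j
    have hentry : (D * (F * E)) i j = (D *ᵥ (fun k => (F * E) k j)) i := rfl
    rw [hentry, hDapp]
    by_cases hj : (j:ℕ) = 0
    · by_cases hi0 : (i:ℕ) = 0
      · rw [dif_neg (by omega), dif_pos (by omega : (i:ℕ) + 1 < N)]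
        rw [hFE, hFE, hE, if_pos hj, if_pos hj,
          if_neg (by omega : ¬((i:ℕ) = N - 1 ∧ (j:ℕ) = 0))]
        simp only [hi0]
        norm_num
        rw [hW0, hW1]
        have h1 := hα0 ((0:ℕ):ℤ)
        have h2 := hα0 (((N-1:ℕ)):ℤ)
        push_cast [Nat.cast_sub (show 1 ≤ N from by omega)] at h1 h2 ⊢
        field_simp
        ring
      · by_cases hiN : (i:ℕ) = N - 1
        · rw [dif_pos (by omega), dif_neg (by omega : ¬((i:ℕ) + 1 < N))]
          rw [hFE, hFE, hE, if_pos hj, if_pos hj, if_pos ⟨hiN, hj⟩]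
          simp only [hiN]
          have hr := hroww (N-1) (by omega)
          rw [show N - 1 + 1 = N from by omega, hwN] at hr
          have hc : N - 1 - 1 = N - 2 := by omega
          simp only [hc]
          rw [show (N-1) - 1 = N - 2 from by omega] at hr
          have h1 := hα0 (((N-1:ℕ)):ℤ)
          have h2 := hα0 (((N-2:ℕ)):ℤ)
          linear_combination (norm := (push_cast [Nat.cast_sub (show 1 ≤ N from by omega), Nat.cast_sub (show 2 ≤ N from by omega)] at h1 h2 ⊢; field_simp; try ring)) (-(1/(γ * α (((N-1:ℕ)):ℤ)))) * hr
        · rw [dif_pos (by omega), dif_pos (by omega : (i:ℕ) + 1 < N)]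
          rw [hFE, hFE, hFE, hE, if_pos hj, if_pos hj, if_pos hj,
            if_neg (by omega : ¬((i:ℕ) = N - 1 ∧ (j:ℕ) = 0))]
          have hr := hroww (i:ℕ) (by omega)
          have h1 := hα0 (((N-1:ℕ)):ℤ)
          have h2 := hα0 ((((i:ℕ)-1:ℕ)):ℤ)
          simp only [Fin.val_mk]
          linear_combination (norm := (push_cast [Nat.cast_sub (show 1 ≤ N from by omega), Nat.cast_sub (show 1 ≤ (i:ℕ) from by omega)] at h1 h2 hr ⊢; field_simp; try ring)) (-(1/(γ * α (((N-1:ℕ)):ℤ)))) * hr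
    · rw [hE, if_neg (fun hc => hj hc.2)]
      have hz : ∀ k : Fin N, (F * E) k j = 0 := fun k => by rw [hFE, if_neg hj]
      simp [hz]
  -- determinant nonzero
  have hdet : IsUnit D.det := by
    rw [isUnit_iff_ne_zero]
    intro hdet0
    obtain ⟨v, hvne, hv⟩ := Matrix.exists_mulVec_eq_zero_iff.mpr hdet0
    have hval : ∀ i : ℕ, ∀ h : i < N, v ⟨i, h⟩ = v ⟨0, by omega⟩ * W 0 i 0 := by
      intro i
      induction i using Nat.strong_induction_on with
      | _ i ih =>
        rcases i with _ | _ | i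
        · intro h
          rw [hW0, mul_one]
        · intro h
          have h0 := congrFun hv ⟨0, by omega⟩
          rw [hDapp] at h0
          rw [dif_neg (by norm_num), dif_pos (by omega : (0:ℕ) + 1 < N)] at h0
          simp only [Pi.zero_apply] at h0
          norm_num at h0
          have ha := hα0 ((0:ℕ):ℤ)
          have key : v ⟨1, h⟩ * α ((0:ℕ):ℤ) = (v ⟨0, by omega⟩ * W 0 1 0) * α ((0:ℕ):ℤ) := by
            rw [hW1]
            linear_combination (norm := (push_cast at ha ⊢; field_simp; try ring)) h0
          exact mul_right_cancel₀ ha key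
        · intro h
          have h1 := congrFun hv ⟨i+1, by omega⟩
          rw [hDapp] at h1
          rw [dif_pos (by norm_num), dif_pos (by omega : (i+1) + 1 < N)] at h1
          simp only [Pi.zero_apply, Nat.add_sub_cancel] at h1
          rw [ih i (by omega) (by omega), ih (i+1) (by omega) (by omega)] at h1
          have hr := hroww (i+1) (by omega)
          simp only [Nat.add_sub_cancel] at hr
          have hαne := hα0 (((i+1:ℕ)):ℤ)
          have key : v ⟨i+1+1, h⟩ * α (((i+1:ℕ)):ℤ)
              = v ⟨0, by omega⟩ * W 0 (i+1+1) 0 * α (((i+1:ℕ)):ℤ) := by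
            linear_combination h1 - v ⟨0, by omega⟩ * hr
          exact mul_right_cancel₀ hαne key
    have hlast := congrFun hv ⟨N-1, by omega⟩
    rw [hDapp] at hlast
    rw [dif_pos (by omega : 0 < N - 1), dif_neg (by omega : ¬(N - 1 + 1 < N))] at hlast
    simp only [Pi.zero_apply] at hlast
    rw [hval (N-1-1) (by omega), hval (N-1) (by omega)] at hlast
    have hr := hroww (N-1) (by omega)
    rw [show N - 1 + 1 = N from by omega, hwN] at hr
    have hv0 : v ⟨0, by omega⟩ = 0 := by
      have hαne := hα0 (((N-1:ℕ)):ℤ)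
      have h2 : v ⟨0, by omega⟩ * (α (((N-1:ℕ)):ℤ) * γ) = 0 := by
        linear_combination v ⟨0, by omega⟩ * hr - hlast
      exact (mul_eq_zero.mp h2).resolve_right (mul_ne_zero hαne hγ0)
    apply hvne
    funext k
    have hk := hval (k:ℕ) k.isLt
    rw [Fin.eta, hv0, zero_mul] at hk
    simpa using hk
  refine ⟨(Matrix.isUnit_iff_isUnit_det D).mpr hdet, hFEt, hEtF, ?_, ?_⟩
  · calc D⁻¹ * E = D⁻¹ * (D * (F * E)) := by rw [hDFE]
    _ = (D⁻¹ * D) * (F * E) := by rw [Matrix.mul_assoc]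
    _ = F * E := by rw [Matrix.nonsing_inv_mul D hdet, Matrix.one_mul]
  · have hDsym : ∀ k j : Fin N, D k j = D j k := by
      intro k j
      rw [hD, hD]
      simp only [Fin.ext_iff]
      split_ifs <;> first | rfl | (exfalso; omega) | (congr 1; omega)
    set t : Fin N → ℝ := fun k => W ((k:ℕ)+1) (N-1-(k:ℕ)) 0 / α (((k:ℕ)):ℤ) with ht
    have hDt : ∀ j : Fin N, (D *ᵥ t) j = if (j:ℕ) = 0 then -γ else 0 := by
      intro j
      rw [hDapp]
      by_cases hj0 : (j:ℕ) = 0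
      · rw [if_pos hj0, dif_neg (by omega), dif_pos (by omega : (j:ℕ) + 1 < N)]
        simp only [ht, Fin.val_mk]
        simp only [hj0]
        norm_num
        rw [show N-1-1 = N-2 from by omega]
        have hs := hsrec 0 (N-2)
        rw [show N-2+2 = N from by omega, show N-2+1 = N-1 from by omega, hwN] at hs
        have h0 := hα0 ((0:ℕ):ℤ)
        have h1 := hα0 (((0:ℕ):ℤ)+1)
        linear_combination (norm := (push_cast at h0 h1 hs ⊢; field_simp; try ring)) hs
      · rw [if_neg hj0, dif_pos (by omega : 0 < (j:ℕ))]
        by_cases hjN : (j:ℕ) + 1 < N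
        · rw [dif_pos hjN]
          simp only [ht, Fin.val_mk]
          have hs := hsrec (j:ℕ) (N-(j:ℕ)-2)
          rw [show N-(j:ℕ)-2+2 = N-(j:ℕ) from by omega,
            show N-(j:ℕ)-2+1 = N-1-(j:ℕ) from by omega,
            show N-(j:ℕ)-2 = N-1-((j:ℕ)+1) from by omega,
            show (j:ℕ)+2 = (j:ℕ)+1+1 from rfl] at hs
          rw [show (j:ℕ)-1+1 = (j:ℕ) from by omega,
            show N-1-((j:ℕ)-1) = N-(j:ℕ) from by omega]
          have h0 := hα0 ((j:ℕ):ℤ)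
          have h1 := hα0 (((j:ℕ):ℤ) + 1)
          have h2 := hα0 ((((j:ℕ)-1:ℕ)):ℤ)
          linear_combination (norm := (push_cast [Nat.cast_sub (show 1 ≤ (j:ℕ) from by omega)] at h0 h1 h2 hs ⊢; field_simp; try ring)) hs
        · rw [dif_neg hjN]
          have hj : (j:ℕ) = N - 1 := by omega
          simp only [ht, Fin.val_mk]
          simp only [hj]
          rw [show N-1-1 = N-2 from by omega, show N-2+1 = N-1 from by omega,
            show N-1-(N-2) = 1 from by omega, show N-1-(N-1) = 0 from by omega,
            show N-1+1 = N from by omega, hW0, hW1]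
          have h0 := hα0 (((N-1:ℕ)):ℤ)
          have h1 := hα0 (((N-2:ℕ)):ℤ)
          push_cast [Nat.cast_sub (show 1 ≤ N from by omega),
            Nat.cast_sub (show 2 ≤ N from by omega)] at h0 h1 ⊢
          field_simp
          ring
    have hFD : ∀ i j : Fin N, (F * D) i j = (-(W 0 i 0)/γ) * (D *ᵥ t) j := by
      intro i j
      rw [Matrix.mul_apply]
      have hterm : ∀ k : Fin N, F i k * D k j = D j k * ((-(W 0 i 0)/γ) * t k) := by
        intro k
        rw [hDsym k j, hF]
        simp only [ht]
        have h0 := hα0 ((k:ℕ):ℤ)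
        field_simp
      rw [Finset.sum_congr rfl (fun k _ => hterm k)]
      have hmv : (D *ᵥ t) j = ∑ k, D j k * t k := rfl
      rw [hmv, Finset.mul_sum]
      exact Finset.sum_congr rfl (fun k _ => by ring)
    ext i j
    simp only [Matrix.add_apply, Matrix.smul_apply, smul_eq_mul, Matrix.zero_apply]
    rw [hFD, hDt, hFE]
    have hcast : α ((N:ℤ) - 1) = α (((N-1:ℕ)):ℤ) := by congr 1; omega
    rw [hcast]
    by_cases hj : (j:ℕ) = 0
    · rw [if_pos hj, if_pos hj]
      have h1 := hα0 (((N-1:ℕ)):ℤ)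
      linear_combination (norm := (push_cast [Nat.cast_sub (show 1 ≤ N from by omega)] at h1 ⊢; field_simp; try ring)) (W 0 i 0 / γ) * hγ2
    · rw [if_neg hj, if_neg hj]
      ring
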